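/- arXiv:2102.13075 — 2 statements merged into one kernel-verified Lean document; each statement's English description precedes it below -/
import Mathlib

section
/- Every ℱ-measurable function f: Ω → [0,∞] is universally capacitable: for every Ω-capacity F, F(f) = sup{F(g) : g: Ω → [0,∞) upper semicontinuous, g ≤ f}. -/
open Filter MeasureTheory Topology
open scoped ENNReal

set_option linter.unusedSectionVars false
set_option linter.unusedVariables false

namespace UEPaper

variable {X : Type} [Fintype X] [Nonempty X] [DecidableEq X]

/-- The set of paths: infinite sequences of states (`ω i` is the `(i+1)`-th state). -/
abbrev Path (X : Type) := ℕ → X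

/-- The prefix `ω^k` of length `k` of a path, as a list (a situation). -/
def prefixList (ω : Path X) (k : ℕ) : List X := (List.range k).map ω

/-- The cylinder event `Γ(s)` of a situation `s`. -/
def cyl (s : List X) : Set (Path X) := {ω | prefixList ω s.length = s}

/-- `f` is `n`-measurable: it depends only on the first `n` states. -/
def NMeas (n : ℕ) (f : Path X → EReal) : Prop :=
  ∀ ω ω' : Path X, prefixList ω n = prefixList ω' n → f ω = f ω'

/-- A gamble: a bounded real-valued global variable. -/
def IsGamble (f : Path X → EReal) : Prop :=
  ∃ B : ℝ, ∀ ω, -(B : EReal) ≤ f ω ∧ f ω ≤ (B : EReal)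

/-- A finitary gamble: an `n`-measurable gamble for some `n`. -/
def IsFinGamble (f : Path X → EReal) : Prop :=
  (∃ n, NMeas n f) ∧ IsGamble f

/-- An upper expectation tree: a coherent upper expectation at each situation. -/
structure UpperExpTree (X : Type) [Fintype X] [Nonempty X] where
  Q : List X → (X → ℝ) → ℝ
  le_sup : ∀ (s : List X) (f : X → ℝ), Q s f ≤ ⨆ x, f x
  subadd : ∀ (s : List X) (f g : X → ℝ), Q s (f + g) ≤ Q s f + Q s g
  pos_homog : ∀ (s : List X) (l : ℝ) (f : X → ℝ), 0 ≤ l → Q s (l • f) = l * Q s f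

/-- A (real-valued) supermartingale for the upper expectation tree `Q`. -/
def IsSupermart (Q : UpperExpTree X) (M : List X → ℝ) : Prop :=
  ∀ s : List X, Q.Q s (fun x => M (s ++ [x])) ≤ M s

/-- The game-theoretic upper expectation of a real-valued variable (used on gambles):
the infimum of `M s` over bounded-below supermartingales `M` with
`liminf_k M(ω^k) ≥ f(ω)` on `Γ(s)`. -/
noncomputable def gtG (Q : UpperExpTree X) (f : Path X → ℝ) (s : List X) : EReal :=
  sInf {a : EReal | ∃ M : List X → ℝ, IsSupermart Q M ∧ (∃ B : ℝ, ∀ t, B ≤ M t) ∧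
    (∀ ω ∈ cyl s,
      (f ω : EReal) ≤ Filter.liminf (fun k => ((M (prefixList ω k) : ℝ) : EReal)) atTop) ∧
    a = ((M s : ℝ) : EReal)}

/-- Extension to bounded-below variables, by continuity w.r.t. upper cuts:
`Ē(f|s) = lim_{c → +∞} Ē(min(f,c)|s)` (the limit of this nondecreasing net is a supremum). -/
noncomputable def gtBB (Q : UpperExpTree X) (f : Path X → EReal) (s : List X) : EReal :=
  ⨆ c : ℝ, gtG Q (fun ω => (f ω ⊓ (c : EReal)).toReal) s

/-- The game-theoretic global upper expectation `Ē_Q̄`, extended to all extended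
real variables by continuity w.r.t. lower cuts:
`Ē(f|s) = lim_{c → −∞} Ē(max(f,c)|s)` (the limit of this nonincreasing net is an infimum). -/
noncomputable def gtUE (Q : UpperExpTree X) (f : Path X → EReal) (s : List X) : EReal :=
  ⨅ c : ℝ, gtBB Q (fun ω => f ω ⊔ (c : EReal)) s

/-- A precise probability tree: a probability mass function at each situation. -/
structure PreciseTree (X : Type) [Fintype X] where
  p : List X → X → ℝ
  nonneg : ∀ (s : List X) (x : X), 0 ≤ p s x
  sum_one : ∀ s : List X, ∑ x, p s x = 1

/-- An imprecise probability tree: a nonempty closed convex set of probability mass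
functions at each situation. -/
structure ImpreciseTree (X : Type) [Fintype X] where
  sets : List X → Set (X → ℝ)
  nonempty' : ∀ s : List X, (sets s).Nonempty
  closed' : ∀ s : List X, IsClosed (sets s)
  convex' : ∀ s : List X, Convex ℝ (sets s)
  prob' : ∀ s : List X, ∀ q ∈ sets s, (∀ x, 0 ≤ q x) ∧ ∑ x, q x = 1

/-- `p ∼ 𝒫`: the precise tree `p` is compatible with the imprecise tree `P`. -/
def Compatible (p : PreciseTree X) (P : ImpreciseTree X) : Prop :=
  ∀ s : List X, p.p s ∈ P.sets s

/-- The probability `P_p(Γ(z)|s)` of the cylinder of `z` conditional on situation `s`. -/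
noncomputable def cylProb (p : List X → X → ℝ) (s z : List X) : ℝ :=
  if s.length < z.length ∧ z.take s.length = s then
    ∏ i ∈ Finset.Ico s.length z.length, p (z.take i) (z.getD i (Classical.arbitrary X))
  else if z.length ≤ s.length ∧ s.take z.length = z then 1 else 0

/-- The σ-algebra `ℱ` on paths generated by the cylinder events. -/
instance cylSigma : MeasurableSpace (Path X) :=
  MeasurableSpace.generateFrom {A | ∃ s : List X, A = cyl s}

/-- `μ` is the probability measure `P_p(·|s)` on `ℱ` determined by the tree `p`. -/
def IsTreeMeasure (p : PreciseTree X) (s : List X) (μ : Measure (Path X)) : Prop :=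
  IsProbabilityMeasure μ ∧ ∀ z : List X, μ (cyl z) = ENNReal.ofReal (cylProb p.p s z)

/-- Positive part of an extended real, in `ℝ≥0∞`. -/
noncomputable def posPart (x : EReal) : ℝ≥0∞ := if x = ⊤ then ⊤ else ENNReal.ofReal x.toReal

/-- The Lebesgue integral `∫ g dμ = ∫ g⁺ dμ − ∫ g⁻ dμ` of an extended-real variable
(well-defined, with value in `(-∞, +∞]`, for bounded-below measurable `g`). -/
noncomputable def integralE (μ : Measure (Path X)) (g : Path X → EReal) : EReal :=
  ((∫⁻ ω, posPart (g ω) ∂μ : ℝ≥0∞) : EReal) - ((∫⁻ ω, posPart (-(g ω)) ∂μ : ℝ≥0∞) : EReal)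

/-- The upper integral `Ē_p(f|s)`: infimum of integrals of bounded-below
`ℱ`-measurable variables dominating `f`. -/
noncomputable def upperInt (μ : Measure (Path X)) (f : Path X → EReal) : EReal :=
  sInf {a : EReal | ∃ g : Path X → EReal, Measurable g ∧ (∃ B : ℝ, ∀ ω, (B : EReal) ≤ g ω) ∧
    (∀ ω, f ω ≤ g ω) ∧ a = integralE μ g}

/-- The measure-theoretic global upper expectation `Ē_𝒫(f|s)`, given the assignment
`Pm` of the measures `P_p(·|s)` to precise trees: the upper envelope of the upper
integrals over all compatible precise trees. -/
noncomputable def muUE (Pm : PreciseTree X → List X → Measure (Path X))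
    (P : ImpreciseTree X) (f : Path X → EReal) (s : List X) : EReal :=
  ⨆ (p : PreciseTree X) (_ : Compatible p P), upperInt (Pm p s) f

/-- The trees `P` and `Q` agree: each `Q̄_s` is the upper envelope of the expectations
corresponding to the credal set `𝒫_s`. -/
def Agree (P : ImpreciseTree X) (Q : UpperExpTree X) : Prop :=
  ∀ (s : List X) (f : X → ℝ),
    Q.Q s f = sSup {r : ℝ | ∃ q ∈ P.sets s, r = ∑ x, f x * q x}

/-- Axioms P1–P5 for a global upper expectation `E` w.r.t. the tree `Q`. -/
structure Axioms (Q : UpperExpTree X) (E : (Path X → EReal) → List X → EReal) : Prop where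
  p1 : ∀ (f : X → ℝ) (s : List X),
    E (fun ω => ((f (ω s.length) : ℝ) : EReal)) s = ((Q.Q s f : ℝ) : EReal)
  p2 : ∀ f : Path X → EReal, IsFinGamble f → ∀ s : List X, E f s = E ((cyl s).indicator f) s
  p3 : ∀ f : Path X → EReal, IsFinGamble f → ∀ s : List X,
    E f s ≤ E (fun ω => E f (prefixList ω (s.length + 1))) s
  p4 : ∀ f g : Path X → EReal, (∀ ω, f ω ≤ g ω) → ∀ s : List X, E f s ≤ E g s
  p5 : ∀ (s : List X) (fn : ℕ → Path X → EReal) (f : Path X → EReal),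
    (∀ n, IsFinGamble (fn n)) → (∃ B : ℝ, ∀ n ω, (B : EReal) ≤ fn n ω) →
    (∀ ω, Tendsto (fun n => fn n ω) atTop (nhds (f ω))) →
    E f s ≤ limsup (fun n => E (fn n) s) atTop

/-- Upper semicontinuity of an extended-real variable on the path space. -/
def USC [TopologicalSpace X] [DiscreteTopology X] (f : Path X → EReal) : Prop :=
  ∀ a : ℝ, IsOpen {ω : Path X | f ω < (a : EReal)}

/-- An `Ω`-capacity (Dellacherie): a monotone `[0,∞]`-valued functional on nonnegative
variables, continuous along nondecreasing sequences, and continuous along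
nonincreasing sequences of nonnegative real-valued upper semicontinuous functions. -/
def IsCapacity [TopologicalSpace X] [DiscreteTopology X]
    (F : (Path X → EReal) → EReal) : Prop :=
  (∀ f : Path X → EReal, (∀ ω, 0 ≤ f ω) → 0 ≤ F f) ∧
  (∀ f g : Path X → EReal, (∀ ω, 0 ≤ f ω) → (∀ ω, 0 ≤ g ω) → (∀ ω, f ω ≤ g ω) → F f ≤ F g) ∧
  (∀ fn : ℕ → Path X → EReal, (∀ n ω, 0 ≤ fn n ω) → Monotone fn →
    Tendsto (fun n => F (fn n)) atTop (nhds (F (fun ω => ⨆ n, fn n ω)))) ∧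
  (∀ fn : ℕ → Path X → EReal, (∀ n ω, 0 ≤ fn n ω ∧ fn n ω < ⊤) → (∀ n, USC (fn n)) →
    Antitone fn →
    Tendsto (fun n => F (fn n)) atTop (nhds (F (fun ω => ⨅ n, fn n ω))))

open Classical in
/-- The metric `δ(ω,ω') = 2^{-n}`, `n` the first (1-based) index where `ω` and `ω'` differ. -/
noncomputable def delta (ω ω' : Path X) : ℝ :=
  if h : ω = ω' then 0
  else (1 / 2 : ℝ) ^ (Nat.find (Function.ne_iff.mp h) + 1)

/-- The product topology on the path space (with `X` discrete). -/
def prodTop (X : Type) : TopologicalSpace (ℕ → X) :=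
  @Pi.topologicalSpace ℕ (fun _ => X) (fun _ => ⊥)

/-! ### Auxiliary development for Statement 12 (Choquet capacitability) -/

section ChoquetAux

/-- Supremum of natural number casts in `EReal` is `⊤`. -/
private lemma ereal_iSup_natCast : ⨆ n : ℕ, ((n : ℝ) : EReal) = ⊤ := by
  refine eq_top_iff.mpr (le_of_forall_lt_imp_le_of_dense fun b hb => ?_)
  rcases le_or_gt b 0 with hb0 | hb0
  · refine hb0.trans (le_trans ?_ (le_iSup (fun n : ℕ => ((n : ℝ) : EReal)) 0))
    norm_num
  · have hbt : b ≠ ⊤ := hb.ne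
    have hbb : b ≠ ⊥ := by
      intro h
      rw [h] at hb0
      exact absurd hb0 (by simp)
    rw [← EReal.coe_toReal hbt hbb]
    refine le_trans ?_ (le_iSup (fun n : ℕ => ((n : ℝ) : EReal)) ⌈b.toReal⌉₊)
    exact_mod_cast Nat.le_ceil _

private lemma ereal_iSup_inf (x : EReal) (hx : 0 ≤ x) :
    ⨆ n : ℕ, x ⊓ ((n : ℝ) : EReal) = x := by
  apply le_antisymm (iSup_le fun n => inf_le_left)
  rcases eq_top_or_lt_top x with rfl | hlt
  · calc (⊤ : EReal) = ⨆ n : ℕ, ((n : ℝ) : EReal) := ereal_iSup_natCast.symm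
      _ ≤ _ := iSup_mono fun n => le_inf le_top le_rfl
  · have hxt : x ≠ ⊤ := hlt.ne
    have hxb : x ≠ ⊥ := by
      intro h
      rw [h] at hx
      exact absurd hx (by simp)
    refine le_trans ?_ (le_iSup (fun n : ℕ => x ⊓ ((n : ℝ) : EReal)) ⌈x.toReal⌉₊)
    refine le_inf le_rfl ?_
    conv_lhs => rw [← EReal.coe_toReal hxt hxb]
    exact_mod_cast Nat.le_ceil _

/-- The sets of the Suslin scheme on `ℕ → ℕ`. -/
private def Sig (v : ℕ → ℕ) (k : ℕ) : Set (ℕ → ℕ) := {σ | ∀ i, i < k → σ i ≤ v i}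

private lemma Sig_zero (v : ℕ → ℕ) : Sig v 0 = Set.univ := by
  ext σ; simp [Sig]

private lemma Sig_congr {v w : ℕ → ℕ} {k : ℕ} (h : ∀ i < k, v i = w i) :
    Sig v k = Sig w k := by
  ext σ
  constructor
  · intro hσ i hi
    rw [← h i hi]; exact hσ i hi
  · intro hσ i hi
    rw [h i hi]; exact hσ i hi

private lemma Sig_update (v : ℕ → ℕ) (k j : ℕ) :
    Sig (Function.update v k j) (k + 1) = Sig v k ∩ {σ | σ k ≤ j} := by
  ext σ
  simp only [Sig, Set.mem_inter_iff, Set.mem_setOf_eq]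
  constructor
  · intro h
    refine ⟨fun i hi => ?_, ?_⟩
    · have := h i (by omega)
      rwa [Function.update_of_ne (by omega)] at this
    · have := h k (by omega)
      rwa [Function.update_self] at this
  · rintro ⟨h1, h2⟩ i hi
    rcases Nat.lt_succ_iff_lt_or_eq.mp hi with hik | rfl
    · rw [Function.update_of_ne (by omega)]
      exact h1 i hik
    · rw [Function.update_self]
      exact h2

private lemma Sig_isClosed (v : ℕ → ℕ) (k : ℕ) : IsClosed (Sig v k) := by
  have : Sig v k = ⋂ (i : ℕ) (_ : i < k), (fun σ : ℕ → ℕ => σ i) ⁻¹' Set.Iic (v i) := by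
    ext σ; simp [Sig]
  rw [this]
  exact isClosed_iInter fun i => isClosed_iInter fun _ =>
    (isClosed_discrete _).preimage (continuous_apply i)

private lemma Sig_anti (v : ℕ → ℕ) {k l : ℕ} (h : k ≤ l) : Sig v l ⊆ Sig v k :=
  fun σ hσ i hi => hσ i (lt_of_lt_of_le hi h)

/-- The iterated-choice chain used to build the Suslin scheme bounds. -/
private def chain (g : (ℕ → ℕ) → ℕ → ℕ) : ℕ → ℕ → ℕ
  | 0 => fun _ => 0
  | k + 1 => Function.update (chain g k) k (g (chain g k) k)

/-- **Choquet's capacitability theorem**, abstract form: an analytic subset of a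
compact subset of a T2 space is capacitable for any set functional that is
monotone, continuous along nondecreasing sequences, and continuous along
nonincreasing sequences of compact sets. -/
private lemma choquet {Y : Type} [TopologicalSpace Y] [T2Space Y]
    {A L : Set Y} (hA : MeasureTheory.AnalyticSet A) (hL : IsCompact L) (hLc : IsClosed L)
    (hAL : A ⊆ L) (I : Set Y → EReal)
    (Imono : ∀ ⦃B C : Set Y⦄, B ⊆ C → I B ≤ I C)
    (Iup : ∀ B : ℕ → Set Y, Monotone B →
      Tendsto (fun n => I (B n)) atTop (nhds (I (⋃ n, B n))))
    (Idown : ∀ K : ℕ → Set Y, (∀ n, IsCompact (K n)) → Antitone K →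
      Tendsto (fun n => I (K n)) atTop (nhds (I (⋂ n, K n))))
    {a : EReal} (ha : a < I A) :
    ∃ K : Set Y, IsCompact K ∧ K ⊆ A ∧ a ≤ I K := by
  rw [MeasureTheory.AnalyticSet] at hA
  rcases hA with rfl | ⟨u, hu, hrange⟩
  · exact ⟨∅, isCompact_empty, Set.Subset.rfl, ha.le⟩
  have step : ∀ (v : ℕ → ℕ) (k : ℕ), a < I (u '' Sig v k) →
      ∃ j, a < I (u '' Sig (Function.update v k j) (k + 1)) := by
    intro v k hvk
    have hmono : Monotone fun j : ℕ => u '' (Sig v k ∩ {σ | σ k ≤ j}) := by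
      intro j1 j2 h
      apply Set.image_mono
      exact Set.inter_subset_inter_right _ fun σ hσ => le_trans hσ h
    have hun' : (⋃ j : ℕ, (Sig v k ∩ {σ | σ k ≤ j})) = Sig v k := by
      ext σ
      refine ⟨fun hσ => ?_, fun h => Set.mem_iUnion.mpr ⟨σ k, h, show σ k ≤ σ k from le_rfl⟩⟩
      obtain ⟨j, hj⟩ := Set.mem_iUnion.mp hσ
      exact hj.1
    have hun : (⋃ j : ℕ, u '' (Sig v k ∩ {σ | σ k ≤ j})) = u '' Sig v k := by
      rw [← Set.image_iUnion, hun']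
    have htd := Iup _ hmono
    rw [hun] at htd
    obtain ⟨j, hj⟩ := (Filter.Tendsto.eventually_const_lt hvk htd).exists
    exact ⟨j, by rwa [Sig_update]⟩
  obtain ⟨g, hg⟩ : ∃ g : (ℕ → ℕ) → ℕ → ℕ, ∀ v k, a < I (u '' Sig v k) →
      a < I (u '' Sig (Function.update v k (g v k)) (k + 1)) :=
    ⟨fun v k => dite (a < I (u '' Sig v k)) (fun h => (step v k h).choose) (fun _ => 0),
      fun v k h => by simp only [dif_pos h]; exact (step v k h).choose_spec⟩
  have hchain : ∀ k, a < I (u '' Sig (chain g k) k) := by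
    intro k
    induction k with
    | zero =>
      rw [show chain g 0 = fun _ => 0 from rfl, Sig_zero, Set.image_univ, hrange]
      exact ha
    | succ k ih =>
      exact hg _ _ ih
  set m : ℕ → ℕ := fun i => chain g (i + 1) i with hm
  have hstable : ∀ k i, i < k → chain g k i = m i := by
    intro k
    induction k with
    | zero => intro i hi; omega
    | succ k ih =>
      intro i hi
      rcases Nat.lt_succ_iff_lt_or_eq.mp hi with hik | rfl
      · rw [show chain g (k + 1) = Function.update (chain g k) k (g (chain g k) k) from rfl,
          Function.update_of_ne (by omega)]
        exact ih i hik
      · rfl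
  have hgood : ∀ k, a < I (u '' Sig m k) := by
    intro k
    have h2 := hchain k
    rwa [Sig_congr (fun i hi => hstable k i hi)] at h2
  set Sinf : Set (ℕ → ℕ) := Set.pi Set.univ fun i => Set.Iic (m i) with hSinf
  have hSinfmem : ∀ σ : ℕ → ℕ, σ ∈ Sinf ↔ ∀ i, σ i ≤ m i := by
    intro σ
    rw [hSinf, Set.mem_univ_pi]
    exact Iff.rfl
  have hSinfc : IsCompact Sinf := isCompact_univ_pi fun i => (Set.finite_Iic (m i)).isCompact
  have hKc : IsCompact (u '' Sinf) := hSinfc.image hu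
  have hKA : u '' Sinf ⊆ A := by
    rintro y ⟨σ, -, rfl⟩
    rw [← hrange]; exact Set.mem_range_self σ
  have key : (⋂ k, closure (u '' Sig m k)) ⊆ u '' Sinf := by
    intro x hx
    by_contra hxK
    obtain ⟨U, V, hUo, hVo, hKU, hxV, hUV⟩ :=
      SeparatedNhds.of_isCompact_isCompact hKc isCompact_singleton
        (Set.disjoint_singleton_right.mpr hxK)
    by_cases hex : ∃ k, Sig m k ⊆ u ⁻¹' U
    · obtain ⟨k, hk⟩ := hex
      have himg : u '' Sig m k ⊆ U := Set.image_subset_iff.mpr hk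
      have hcl : x ∈ closure U := closure_mono himg (Set.mem_iInter.mp hx k)
      obtain ⟨y, hyV, hyU⟩ := mem_closure_iff.mp hcl V hVo (hxV rfl)
      exact Set.disjoint_left.mp hUV hyU hyV
    · push_neg at hex
      choose σs hσ1 hσ2 using fun k => Set.not_subset.mp (hex k)
      set C : Set (ℕ → ℕ) :=
        Set.pi Set.univ fun i => Set.Iic (m i) ∪ (fun k => σs k i) '' Set.Iic i with hC
      have hCc : IsCompact C := isCompact_univ_pi fun i =>
        (((Set.finite_Iic (m i)).union ((Set.finite_Iic i).image _))).isCompact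
      have hmemC : ∀ k, σs k ∈ C := by
        intro k
        rw [hC, Set.mem_univ_pi]
        intro i
        rcases lt_or_ge i k with h | h
        · exact Or.inl (hσ1 k i h)
        · exact Or.inr ⟨k, h, rfl⟩
      have hneb : (Filter.map σs (Filter.atTop : Filter ℕ)).NeBot := by exact Filter.map_neBot
      obtain ⟨τ, hτC, hclus⟩ := hCc.exists_clusterPt
        (f := Filter.map σs (Filter.atTop : Filter ℕ))
        (Filter.le_principal_iff.mpr (Filter.mem_map.mpr (Filter.univ_mem' hmemC)))
      have hτ : ∀ k, τ ∈ Sig m k ∧ τ ∉ u ⁻¹' U := by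
        intro k
        have hTk : σs '' Set.Ici k ∈ Filter.map σs Filter.atTop :=
          Filter.image_mem_map (Filter.Ici_mem_atTop k)
        have hcp : ClusterPt τ (Filter.principal (σs '' Set.Ici k)) :=
          hclus.mono (Filter.le_principal_iff.mpr hTk)
        have hτcl : τ ∈ closure (σs '' Set.Ici k) := mem_closure_iff_clusterPt.mpr hcp
        have hsub : σs '' Set.Ici k ⊆ (Sig m k) ∩ (u ⁻¹' U)ᶜ := by
          rintro - ⟨j, hj, rfl⟩
          exact ⟨fun i hi => hσ1 j i (lt_of_lt_of_le hi hj), hσ2 j⟩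
        have hclosed : IsClosed ((Sig m k) ∩ (u ⁻¹' U)ᶜ) :=
          (Sig_isClosed m k).inter (hUo.preimage hu).isClosed_compl
        exact closure_minimal hsub hclosed hτcl
      have htauS : τ ∈ Sinf := (hSinfmem τ).mpr fun i => (hτ (i + 1)).1 i (Nat.lt_succ_self i)
      exact (hτ 0).2 (hKU ⟨τ, htauS, rfl⟩)
  have hCcpt : ∀ k, IsCompact (closure (u '' Sig m k)) := by
    intro k
    refine IsCompact.of_isClosed_subset hL isClosed_closure (closure_minimal ?_ hLc)
    rintro y ⟨σ, -, rfl⟩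
    exact hAL (hrange ▸ Set.mem_range_self σ)
  have hCanti : Antitone fun k => closure (u '' Sig m k) := fun k l hkl =>
    closure_mono (Set.image_mono (Sig_anti m hkl))
  have hlim := Idown _ hCcpt hCanti
  have hge : a ≤ I (⋂ k, closure (u '' Sig m k)) :=
    ge_of_tendsto hlim (Filter.Eventually.of_forall fun k =>
      ((hgood k).le.trans (Imono subset_closure)))
  exact ⟨u '' Sinf, hKc, hKA, hge.trans (Imono key)⟩

end ChoquetAux

section PathAux

variable [TopologicalSpace X] [DiscreteTopology X]

lemma prefixList_length (ω : Path X) (k : ℕ) : (prefixList ω k).length = k := by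
  simp [prefixList]

lemma prefixList_eq_iff {ω ω' : Path X} {k : ℕ} :
    prefixList ω k = prefixList ω' k ↔ ∀ i < k, ω i = ω' i := by
  simp [prefixList, List.map_inj_left, List.mem_range]

lemma mem_cyl_prefixList (ω : Path X) (k : ℕ) : ω ∈ cyl (prefixList ω k) := by
  show prefixList ω (prefixList ω k).length = prefixList ω k
  rw [prefixList_length]

lemma prefixList_getElem (ω : Path X) (k i : ℕ) (h : i < (prefixList ω k).length) :
    (prefixList ω k)[i] = ω i := by
  simp [prefixList]

lemma exists_prefix_base (s : List X) : ∃ ω₀ : Path X, prefixList ω₀ s.length = s := by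
  refine ⟨fun i => s.getD i (Classical.arbitrary X), ?_⟩
  refine List.ext_getElem (prefixList_length _ _) fun i h1 h2 => ?_
  rw [prefixList_getElem]
  exact List.getD_eq_getElem s _ h2

lemma isOpen_cyl (s : List X) : IsOpen (cyl s) := by
  obtain ⟨ω₀, hω₀⟩ := exists_prefix_base s
  have hrep : cyl s = ⋂ i ∈ Finset.range s.length, (fun ω : Path X => ω i) ⁻¹' {ω₀ i} := by
    ext ω
    simp only [cyl, Set.mem_setOf_eq, Set.mem_iInter, Set.mem_preimage,
      Set.mem_singleton_iff, Finset.mem_range]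
    constructor
    · intro h i hi
      exact prefixList_eq_iff.mp (h.trans hω₀.symm) i hi
    · intro h
      exact (prefixList_eq_iff.mpr h).trans hω₀
  rw [hrep]
  exact isOpen_biInter_finset fun i _ =>
    IsOpen.preimage (continuous_apply i) (isOpen_discrete _)

theorem cylSigma_eq_borel :
    (cylSigma : MeasurableSpace (Path X)) = borel (Path X) := by
  apply le_antisymm
  · apply MeasurableSpace.generateFrom_le
    rintro A ⟨s, rfl⟩
    exact MeasurableSpace.measurableSet_generateFrom (isOpen_cyl s)
  · rw [borel]
    apply MeasurableSpace.generateFrom_le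
    intro O hO
    have hO' : IsOpen O := hO
    have hrep : O = ⋃ s : {s : List X // cyl s ⊆ O}, cyl s.1 := by
      apply Set.Subset.antisymm
      · intro ω hω
        obtain ⟨I, v, h1, h2⟩ := isOpen_pi_iff.mp hO' ω hω
        set k := I.sup id + 1 with hk
        have hsub : cyl (prefixList ω k) ⊆ O := by
          intro ω' hω'
          refine h2 (Set.mem_pi.mpr fun i hi => ?_)
          have hik : i < k := Nat.lt_succ_of_le (Finset.le_sup (f := id) hi)
          have heq : prefixList ω' k = prefixList ω k := by
            have h3 := hω'
            rwa [cyl, Set.mem_setOf_eq, prefixList_length] at h3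
          rw [prefixList_eq_iff.mp heq i hik]
          exact (h1 i hi).2
        exact Set.mem_iUnion.mpr ⟨⟨prefixList ω k, hsub⟩, mem_cyl_prefixList ω k⟩
      · intro ω hω
        obtain ⟨s, hs⟩ := Set.mem_iUnion.mp hω
        exact s.2 hs
    rw [hrep]
    exact MeasurableSet.iUnion fun s =>
      MeasurableSpace.measurableSet_generateFrom ⟨s.1, rfl⟩

instance pathBorelSpace : BorelSpace (Path X) := ⟨cylSigma_eq_borel⟩

/-- The upper envelope of (the vertical sections of) a subset of `Ω × ℝ`. -/
noncomputable def hSet (A : Set (Path X × ℝ)) (ω : Path X) : EReal :=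
  sSup (insert 0 (Real.toEReal '' {t : ℝ | (ω, t) ∈ A}))

lemma hSet_nonneg (A : Set (Path X × ℝ)) (ω : Path X) : 0 ≤ hSet A ω :=
  le_sSup (Set.mem_insert _ _)

lemma le_hSet {A : Set (Path X × ℝ)} {ω : Path X} {t : ℝ} (h : (ω, t) ∈ A) :
    (t : EReal) ≤ hSet A ω :=
  le_sSup (Set.mem_insert_of_mem _ ⟨t, h, rfl⟩)

lemma hSet_le {A : Set (Path X × ℝ)} {ω : Path X} {b : EReal} (h0 : 0 ≤ b)
    (h : ∀ t : ℝ, (ω, t) ∈ A → (t : EReal) ≤ b) : hSet A ω ≤ b := by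
  apply sSup_le
  intro x hx
  simp only [Set.mem_insert_iff, Set.mem_image, Set.mem_setOf_eq] at hx
  rcases hx with rfl | ⟨t, ht, rfl⟩
  · exact h0
  · exact h t ht

lemma hSet_mono {A B : Set (Path X × ℝ)} (h : A ⊆ B) (ω : Path X) :
    hSet A ω ≤ hSet B ω :=
  hSet_le (hSet_nonneg B ω) fun t ht => le_hSet (h ht)

lemma hSet_iUnion (A : ℕ → Set (Path X × ℝ)) (ω : Path X) :
    hSet (⋃ n, A n) ω = ⨆ n, hSet (A n) ω := by
  apply le_antisymm
  · apply hSet_le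
    · exact le_trans (hSet_nonneg (A 0) ω) (le_iSup (fun n => hSet (A n) ω) 0)
    · intro t ht
      obtain ⟨n, hn⟩ := Set.mem_iUnion.mp ht
      exact (le_hSet hn).trans (le_iSup (fun n => hSet (A n) ω) n)
  · exact iSup_le fun n => hSet_mono (Set.subset_iUnion A n) ω

lemma sec_isCompact {K : Set (Path X × ℝ)} (hK : IsCompact K) (ω : Path X) :
    IsCompact {t : ℝ | (ω, t) ∈ K} := by
  have hrep : {t : ℝ | (ω, t) ∈ K} = Prod.snd '' (K ∩ (Prod.fst ⁻¹' {ω})) := by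
    ext t
    constructor
    · intro ht
      exact ⟨(ω, t), ⟨ht, rfl⟩, rfl⟩
    · rintro ⟨⟨ω', t'⟩, ⟨hK', hω'⟩, rfl⟩
      have : ω' = ω := hω'
      rwa [this] at hK'
  rw [hrep]
  exact (hK.inter_right (isClosed_singleton.preimage continuous_fst)).image continuous_snd

lemma hSet_lt_top {K : Set (Path X × ℝ)} (hK : IsCompact K) (ω : Path X) :
    hSet K ω < ⊤ := by
  obtain ⟨R, hR⟩ := (hK.image continuous_snd).bddAbove
  have hle : hSet K ω ≤ ((max R 0 : ℝ) : EReal) := by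
    apply hSet_le
    · exact_mod_cast le_max_right R 0
    · intro t ht
      have h1 : t ≤ R := hR ⟨(ω, t), ht, rfl⟩
      exact_mod_cast h1.trans (le_max_left _ _)
  exact hle.trans_lt (EReal.coe_lt_top _)

lemma hSet_ge_real {K : Set (Path X × ℝ)} (hK : IsCompact K) {ω : Path X} {a : ℝ}
    (ha : 0 < a) (h : (a : EReal) ≤ hSet K ω) : ∃ t : ℝ, (ω, t) ∈ K ∧ a ≤ t := by
  by_cases hne : {t : ℝ | (ω, t) ∈ K}.Nonempty
  · set M := sSup {t : ℝ | (ω, t) ∈ K} with hM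
    have hMmem : M ∈ {t : ℝ | (ω, t) ∈ K} := (sec_isCompact hK ω).sSup_mem hne
    refine ⟨M, hMmem, ?_⟩
    have hb : hSet K ω ≤ (0 : EReal) ⊔ (M : EReal) := by
      apply hSet_le le_sup_left
      intro t ht
      have := le_csSup (sec_isCompact hK ω).bddAbove ht
      exact le_sup_of_le_right (by exact_mod_cast this)
    rcases le_sup_iff.mp (h.trans hb) with h' | h'
    · exfalso
      have : a ≤ (0 : ℝ) := by exact_mod_cast h'
      linarith
    · exact_mod_cast h'
  · exfalso
    have hle : hSet K ω ≤ 0 := by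
      apply hSet_le le_rfl
      intro t ht
      exact absurd ⟨t, ht⟩ hne
    have : a ≤ (0 : ℝ) := by exact_mod_cast h.trans hle
    linarith

lemma hSet_usc {K : Set (Path X × ℝ)} (hK : IsCompact K) : USC (hSet K) := by
  intro a
  rcases le_or_gt a 0 with ha | ha
  · convert isOpen_empty
    ext ω
    simp only [Set.mem_setOf_eq, Set.mem_empty_iff_false, iff_false, not_lt]
    calc ((a : ℝ) : EReal) ≤ ((0 : ℝ) : EReal) := by exact_mod_cast ha
      _ ≤ hSet K ω := by simpa using hSet_nonneg K ω
  · have hiff : ∀ ω : Path X,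
        ω ∈ Prod.fst '' (K ∩ (Set.univ ×ˢ Set.Ici a)) ↔ (a : EReal) ≤ hSet K ω := by
      intro ω
      constructor
      · rintro ⟨⟨ω', t⟩, ⟨hpK, hpI⟩, rfl⟩
        have hat : a ≤ t := hpI.2
        exact le_trans (by exact_mod_cast hat) (le_hSet hpK)
      · intro h
        obtain ⟨t, htK, hat⟩ := hSet_ge_real hK ha h
        exact ⟨(ω, t), ⟨htK, ⟨Set.mem_univ _, hat⟩⟩, rfl⟩
    have hrep : {ω : Path X | hSet K ω < (a : EReal)} =
        (Prod.fst '' (K ∩ (Set.univ ×ˢ Set.Ici a)))ᶜ := by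
      ext ω
      rw [Set.mem_compl_iff, hiff, Set.mem_setOf_eq, not_le]
    rw [hrep]
    exact (((hK.inter_right (isClosed_univ.prod isClosed_Ici)).image
      continuous_fst).isClosed).isOpen_compl

lemma hSet_iInter {K : ℕ → Set (Path X × ℝ)} (hcpt : ∀ n, IsCompact (K n))
    (hanti : Antitone K) (ω : Path X) :
    hSet (⋂ n, K n) ω = ⨅ n, hSet (K n) ω := by
  refine le_antisymm (le_iInf fun n => hSet_mono (Set.iInter_subset K n) ω) ?_
  set b := ⨅ n, hSet (K n) ω with hb
  rcases le_or_gt b 0 with hb0 | hb0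
  · exact hb0.trans (hSet_nonneg _ _)
  · obtain ⟨r, hr0, hrb⟩ := EReal.exists_between_coe_real hb0
    have hr0' : (0 : ℝ) < r := by exact_mod_cast hr0
    have hsec : ∀ n, ∃ t : ℝ, (ω, t) ∈ K n ∧ r ≤ t := fun n =>
      hSet_ge_real (hcpt n) hr0' (hrb.le.trans (iInf_le (fun n => hSet (K n) ω) n))
    have hne : ∀ n, {t : ℝ | (ω, t) ∈ K n}.Nonempty := fun n =>
      ⟨(hsec n).choose, (hsec n).choose_spec.1⟩
    set t : ℕ → ℝ := fun n => sSup {t : ℝ | (ω, t) ∈ K n} with ht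
    have htmem : ∀ n, (ω, t n) ∈ K n := fun n =>
      (sec_isCompact (hcpt n) ω).sSup_mem (hne n)
    have htanti : Antitone t := fun n1 n2 h =>
      csSup_le_csSup (sec_isCompact (hcpt n1) ω).bddAbove (hne n2)
        (fun x hx => hanti h hx)
    have htlb : ∀ n, r ≤ t n := fun n =>
      ((hsec n).choose_spec.2).trans
        (le_csSup (sec_isCompact (hcpt n) ω).bddAbove (hsec n).choose_spec.1)
    have hbdd : BddBelow (Set.range t) := ⟨r, by rintro x ⟨n, rfl⟩; exact htlb n⟩
    have htt : Tendsto t atTop (nhds (⨅ n, t n)) := tendsto_atTop_ciInf htanti hbdd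
    have hTmem : ∀ n, (ω, ⨅ n, t n) ∈ K n := by
      intro n
      apply (sec_isCompact (hcpt n) ω).isClosed.mem_of_tendsto htt
      filter_upwards [eventually_ge_atTop n] with j hj
      exact hanti hj (htmem j)
    have hbT : b ≤ ((⨅ n, t n : ℝ) : EReal) := by
      have hcoe : Tendsto (fun n => ((t n : ℝ) : EReal)) atTop
          (nhds ((⨅ n, t n : ℝ) : EReal)) :=
        (continuous_coe_real_ereal.tendsto _).comp htt
      apply ge_of_tendsto hcoe
      filter_upwards with n
      have h1 : b ≤ hSet (K n) ω := iInf_le (fun n => hSet (K n) ω) n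
      have h2 : hSet (K n) ω ≤ (0 : EReal) ⊔ ((t n : ℝ) : EReal) := by
        apply hSet_le le_sup_left
        intro s hs
        have := le_csSup (sec_isCompact (hcpt n) ω).bddAbove hs
        exact le_sup_of_le_right (by exact_mod_cast this)
      rcases le_sup_iff.mp (h1.trans h2) with h' | h'
      · exact absurd (lt_of_lt_of_le hb0 h') (lt_irrefl 0)
      · exact h'
    exact hbT.trans (le_hSet (Set.mem_iInter.mpr hTmem))

lemma hSet_cut {f : Path X → EReal} (hf0 : ∀ ω, 0 ≤ f ω) {c : ℝ} (hc : 0 ≤ c)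
    (ω : Path X) :
    hSet {p : Path X × ℝ | p.2 ∈ Set.Icc 0 c ∧ (p.2 : EReal) ≤ f p.1} ω
      = f ω ⊓ (c : EReal) := by
  apply le_antisymm
  · apply hSet_le
    · exact le_inf (hf0 ω) (by exact_mod_cast hc)
    · rintro t ⟨⟨h0, hc'⟩, hft⟩
      exact le_inf hft (by exact_mod_cast hc')
  · rcases le_total (f ω) ((c : ℝ) : EReal) with h | h
    · rw [inf_eq_left.mpr h]
      have hne_top : f ω ≠ ⊤ := (h.trans_lt (EReal.coe_lt_top c)).ne
      have hne_bot : f ω ≠ ⊥ := by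
        intro hbot
        have := hf0 ω
        rw [hbot] at this
        exact absurd this (by simp)
      have h0r : (0 : ℝ) ≤ (f ω).toReal := by
        have h1 : ((0 : ℝ) : EReal) ≤ (((f ω).toReal : ℝ) : EReal) := by
          rw [EReal.coe_toReal hne_top hne_bot]
          simpa using hf0 ω
        exact_mod_cast h1
      have hcr : (f ω).toReal ≤ c := by
        have h1 : (((f ω).toReal : ℝ) : EReal) ≤ ((c : ℝ) : EReal) := by
          rw [EReal.coe_toReal hne_top hne_bot]
          exact h
        exact_mod_cast h1
      have hmem : (ω, (f ω).toReal) ∈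
          {p : Path X × ℝ | p.2 ∈ Set.Icc 0 c ∧ (p.2 : EReal) ≤ f p.1} := by
        refine ⟨⟨h0r, hcr⟩, ?_⟩
        rw [EReal.coe_toReal hne_top hne_bot]
      have := le_hSet hmem
      rwa [EReal.coe_toReal hne_top hne_bot] at this
    · rw [inf_eq_right.mpr h]
      exact le_hSet ⟨⟨hc, le_rfl⟩, h⟩

end PathAux

theorem stmt12 [TopologicalSpace X] [DiscreteTopology X]
    (f : Path X → EReal) (hf0 : ∀ ω, 0 ≤ f ω) (hmeas : Measurable f) :
    ∀ F : (Path X → EReal) → EReal, IsCapacity F →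
      F f = sSup {a : EReal | ∃ g : Path X → EReal, USC g ∧
        (∀ ω, 0 ≤ g ω ∧ g ω < ⊤) ∧ (∀ ω, g ω ≤ f ω) ∧ a = F g} := by
  intro F hF
  obtain ⟨hF0, hFmono, hFup, hFdown⟩ := hF
  apply le_antisymm
  · -- hard direction: `F f ≤ sSup {…}` via Choquet capacitability
    apply le_of_forall_lt_imp_le_of_dense
    intro a ha
    -- truncate `f` at level `n`
    have htrunc := hFup (fun n ω => f ω ⊓ ((n : ℝ) : EReal))
      (fun n ω => le_inf (hf0 ω) (by exact_mod_cast Nat.cast_nonneg n))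
      (fun n1 n2 h ω =>
        inf_le_inf_left (f ω) (by exact_mod_cast Nat.cast_le.mpr h))
    rw [show (fun ω => ⨆ n : ℕ, f ω ⊓ ((n : ℝ) : EReal)) = f from
      funext fun ω => ereal_iSup_inf (f ω) (hf0 ω)] at htrunc
    obtain ⟨n, hn⟩ := (Filter.Tendsto.eventually_const_lt ha htrunc).exists
    set c : ℝ := (n : ℝ) with hcdef
    have hc : (0 : ℝ) ≤ c := Nat.cast_nonneg n
    set S : Set (Path X × ℝ) := {p | p.2 ∈ Set.Icc 0 c ∧ (p.2 : EReal) ≤ f p.1} with hSdef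
    have hSm : MeasurableSet S := by
      have hrep : S = (Prod.snd ⁻¹' Set.Icc 0 c) ∩
          {p : Path X × ℝ | ((p.2 : ℝ) : EReal) ≤ f p.1} := rfl
      rw [hrep]
      exact (measurable_snd measurableSet_Icc).inter
        (measurableSet_le (measurable_coe_real_ereal.comp measurable_snd)
          (hmeas.comp measurable_fst))
    haveI : PolishSpace X := {}
    have hSa : MeasureTheory.AnalyticSet S := hSm.analyticSet
    have hIS : hSet S = fun ω => f ω ⊓ (c : EReal) :=
      funext fun ω => hSet_cut hf0 hc ω
    obtain ⟨K, hKc, hKS, haK⟩ := choquet hSa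
      (isCompact_univ.prod isCompact_Icc) (isClosed_univ.prod isClosed_Icc)
      (fun p hp => ⟨Set.mem_univ _, hp.1⟩) (fun A => F (hSet A))
      (fun B C h => hFmono _ _ (fun ω => hSet_nonneg B ω) (fun ω => hSet_nonneg C ω)
        (hSet_mono h))
      (fun B hB => by
        have h1 := hFup (fun j => hSet (B j)) (fun j ω => hSet_nonneg _ _)
          (fun j1 j2 h ω => hSet_mono (hB h) ω)
        rwa [show (fun ω => ⨆ j, hSet (B j) ω) = hSet (⋃ j, B j) from
          funext fun ω => (hSet_iUnion B ω).symm] at h1)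
      (fun Kn hKcpt hKanti => by
        have h1 := hFdown (fun j => hSet (Kn j))
          (fun j ω => ⟨hSet_nonneg _ _, hSet_lt_top (hKcpt j) ω⟩)
          (fun j => hSet_usc (hKcpt j))
          (fun j1 j2 h ω => hSet_mono (hKanti h) ω)
        rwa [show (fun ω => ⨅ j, hSet (Kn j) ω) = hSet (⋂ j, Kn j) from
          funext fun ω => (hSet_iInter hKcpt hKanti ω).symm] at h1)
      (by show a < F (hSet S); rw [hIS]; exact hn)
    refine le_trans haK (le_sSup ?_)
    refine ⟨hSet K, hSet_usc hKc, fun ω => ⟨hSet_nonneg _ _, hSet_lt_top hKc ω⟩,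
      fun ω => ?_, rfl⟩
    have h1 : hSet K ω ≤ hSet S ω := hSet_mono hKS ω
    rw [hIS] at h1
    exact h1.trans inf_le_left
  · -- easy direction: monotonicity
    apply sSup_le
    rintro a ⟨g, hgu, hg, hgle, rfl⟩
    exact hFmono g f (fun ω => (hg ω).1) hf0 hgle

end UEPaper
end

section
/- Let F be an operator mapping functions Ω → ℝ̄ to ℝ̄ that is monotone (f ≤ g pointwise implies F(f) ≤ F(g)) and continuous with respect to non-increasing sequences of finitary gambles (lim_n F(f_n) = F(lim_n f_n) whenever (f_n) is a pointwise non-increasing sequence of finitary gambles). Then F is continuous with respect to non-increasing sequences of upper semicontinuous bounded-above variables: for every pointwise non-increasing sequence (f_n) of upper semicontinuous, bounded-above functions f_n: Ω → ℝ̄ with pointwise limit f = inf_n f_n, lim_{n→∞} F(f_n) = F(f). -/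
open Filter MeasureTheory Topology
open scoped ENNReal

namespace UEPaper

variable {X : Type} [Fintype X] [Nonempty X] [DecidableEq X]

lemma prefix_eq_iff (ω ω' : Path X) (k : ℕ) :
    prefixList ω k = prefixList ω' k ↔ ∀ i < k, ω i = ω' i := by
  simp [prefixList, List.map_inj_left]

lemma prefix_mono {ω ω' : Path X} {k m : ℕ} (hkm : k ≤ m)
    (h : prefixList ω m = prefixList ω' m) : prefixList ω k = prefixList ω' k := by
  rw [prefix_eq_iff] at h ⊢
  exact fun i hi => h i (lt_of_lt_of_le hi hkm)

lemma cyl_nhds [TopologicalSpace X] [DiscreteTopology X] {U : Set (Path X)} (hU : IsOpen U)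
    {ω : Path X} (hω : ω ∈ U) :
    ∃ k, ∀ ω', prefixList ω' k = prefixList ω k → ω' ∈ U := by
  obtain ⟨I, u, h1, h2⟩ := isOpen_pi_iff.mp hU ω hω
  refine ⟨I.sup id + 1, fun ω' hp => h2 ?_⟩
  intro i hi
  have hlt : i < I.sup id + 1 := Nat.lt_succ_of_le (Finset.le_sup (f := id) hi)
  rw [(prefix_eq_iff ω' ω _).mp hp i hlt]
  exact (h1 i hi).2

noncomputable def hAux (fn : ℕ → Path X → EReal) (k : ℕ) (ω : Path X) : EReal :=
  sSup (fn k '' {w | prefixList w k = prefixList ω k}) ⊔ ((-(k : ℝ) : ℝ) : EReal)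


theorem stmt17 [TopologicalSpace X] [DiscreteTopology X]
    (F : (Path X → EReal) → EReal)
    (hmono : ∀ f g : Path X → EReal, (∀ ω, f ω ≤ g ω) → F f ≤ F g)
    (hcont : ∀ fn : ℕ → Path X → EReal, (∀ n, IsFinGamble (fn n)) → Antitone fn →
      Tendsto (fun n => F (fn n)) atTop (nhds (F (fun ω => ⨅ n, fn n ω))))
    (fn : ℕ → Path X → EReal)
    (husc : ∀ n, USC (fn n)) (hba : ∀ n, ∃ B : ℝ, ∀ ω, fn n ω ≤ (B : EReal))
    (hanti : Antitone fn) (f : Path X → EReal) (hf : ∀ ω, f ω = ⨅ n, fn n ω) :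
    Tendsto (fun n => F (fn n)) atTop (nhds (F f)) := by
  set h := hAux fn with hh
  -- h k ≥ fn k pointwise
  have hge : ∀ k ω, fn k ω ≤ h k ω := by
    intro k ω
    have hm : fn k ω ∈ fn k '' {w | prefixList w k = prefixList ω k} :=
      Set.mem_image_of_mem _ rfl
    exact le_trans (le_sSup hm) le_sup_left
  -- antitone
  have hantih : Antitone h := by
    intro k m hkm ω
    refine sup_le_sup ?_ ?_
    · refine sSup_le ?_
      rintro a ⟨w, hw, rfl⟩
      exact le_trans (hanti hkm w) (le_sSup ⟨w, prefix_mono hkm hw, rfl⟩)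
    · exact EReal.coe_le_coe_iff.mpr (by simp; exact_mod_cast hkm)
  -- finitary gambles
  have hfin : ∀ k, IsFinGamble (h k) := by
    intro k
    obtain ⟨B, hB⟩ := hba k
    constructor
    · refine ⟨k, fun ω ω' hp => ?_⟩
      simp only [hh, hAux]
      rw [show {w : Path X | prefixList w k = prefixList ω k}
            = {w | prefixList w k = prefixList ω' k} by rw [hp]]
    · refine ⟨max B k, fun ω => ⟨?_, ?_⟩⟩
      · refine le_trans ?_ le_sup_right
        rw [show (-(((B ⊔ (k:ℝ)) : ℝ) : EReal)) = (((-(B ⊔ (k:ℝ)) : ℝ)) : EReal) from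
          (EReal.coe_neg _).symm, EReal.coe_le_coe_iff]
        have := le_max_right B (k:ℝ)
        linarith
      · refine sup_le (sSup_le ?_) ?_
        · rintro a ⟨w, _, rfl⟩
          exact le_trans (hB w) (EReal.coe_le_coe_iff.mpr (le_max_left B k))
        · refine EReal.coe_le_coe_iff.mpr ?_
          have h0 : (0:ℝ) ≤ (k:ℝ) := by positivity
          have := le_max_right B (k:ℝ)
          linarith
  -- infimum of h is f
  have hinf : ∀ ω, (⨅ k, h k ω) = f ω := by
    intro ω
    refine le_antisymm ?_ ?_
    · rw [hf]
      refine le_iInf fun n => ?_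
      rw [← EReal.le_of_forall_lt_iff_le]
      intro c hc
      obtain ⟨k, hk⟩ := cyl_nhds (husc n c) (by simpa using hc)
      obtain ⟨m0, hm0⟩ := exists_nat_ge (-c)
      set m := max n (max k m0) with hm
      refine le_trans (iInf_le _ m) (sup_le (sSup_le ?_) ?_)
      · rintro a ⟨w, hw, rfl⟩
        have hw' : fn n w < (c : EReal) := hk w (prefix_mono (le_max_of_le_right (le_max_left k m0)) hw)
        exact le_trans (hanti (le_max_left n _) w) hw'.le
      · rw [EReal.coe_le_coe_iff]
        have : (m0 : ℝ) ≤ (m : ℝ) := by exact_mod_cast le_max_of_le_right (le_max_right k m0)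
        linarith
    · rw [hf]
      exact le_iInf fun k => le_trans (iInf_le _ k) (hge k ω)
  -- squeeze
  have hlim : Tendsto (fun k => F (h k)) atTop (nhds (F f)) := by
    have := hcont h hfin hantih
    have hfe : (fun ω => ⨅ n, h n ω) = f := funext hinf
    rwa [hfe] at this
  refine tendsto_of_tendsto_of_tendsto_of_le_of_le (tendsto_const_nhds) hlim
    (fun k => hmono f (fn k) fun ω => ?_) (fun k => hmono (fn k) (h k) (hge k))
  rw [hf ω]; exact iInf_le _ k


end UEPaper
end
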